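/- Let λ > 0, a > 2, and let p_λ be the SCAD penalty with coordinatewise sum P_λ(x) = Σ_{j=1}^p p_λ(|x_j|) for x ∈ ℝ^p. Let ψ*, ψ̂ ∈ ℝ^p, set ν = ψ̂ − ψ*, and let S ⊆ {1,…,p} be such that ψ*_j = 0 for all j ∉ S. Then P_λ(ψ*) − P_λ(ψ̂) ≤ λ‖ν_S‖₁ − P_λ(ν_{S^c}), where ν_S (respectively ν_{S^c}) is the vector equal to ν on S (respectively on the complement of S) and zero elsewhere. -/

import Mathlib

/-- The SCAD penalty with regularization parameter `lam` and non-convexity parameter `a`. -/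
noncomputable def scad (lam a t : ℝ) : ℝ :=
  if t ≤ lam then lam * t
  else if t ≤ a * lam then -(t ^ 2 - 2 * a * lam * t + lam ^ 2) / (2 * (a - 1))
  else (a + 1) * lam ^ 2 / 2

/-- Coordinatewise SCAD penalty `P_λ(x) = Σ_j p_λ(|x_j|)`. -/
noncomputable def scadSum (lam a : ℝ) {p : ℕ} (x : Fin p → ℝ) : ℝ :=
  ∑ j, scad lam a |x j|

lemma scad_mono (lam a s t : ℝ) (hlam : 0 < lam) (ha : 1 < a) (hs : 0 ≤ s) (hst : s ≤ t) :
    scad lam a s ≤ scad lam a t := by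
  have h2a : (0:ℝ) < 2 * (a - 1) := by linarith
  have hq3 : ∀ u v : ℝ, u ≤ v → u + v ≤ 2 * a * lam →
      -(u ^ 2 - 2 * a * lam * u + lam ^ 2) / (2 * (a - 1)) ≤
      -(v ^ 2 - 2 * a * lam * v + lam ^ 2) / (2 * (a - 1)) := by
    intro u v h1 h2
    rw [div_le_div_iff_of_pos_right h2a]
    nlinarith [mul_nonneg (sub_nonneg.2 h1) (by linarith : (0:ℝ) ≤ 2 * a * lam - (u + v))]
  have hq4 : ∀ u : ℝ, lam ≤ u → u ≤ a * lam →
      lam * lam ≤ -(u ^ 2 - 2 * a * lam * u + lam ^ 2) / (2 * (a - 1)) := by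
    intro u h1 h2
    rw [le_div_iff₀ h2a]
    nlinarith [mul_nonneg (sub_nonneg.2 h1) (by nlinarith : (0:ℝ) ≤ (2 * a - 1) * lam - u)]
  have hq5 : (a + 1) * lam ^ 2 / 2 =
      -((a * lam) ^ 2 - 2 * a * lam * (a * lam) + lam ^ 2) / (2 * (a - 1)) := by
    rw [eq_div_iff h2a.ne']; ring
  unfold scad
  split_ifs <;>
    first
      | linarith
      | nlinarith
      | nlinarith [hq4 t (by linarith) (by linarith)]
      | nlinarith [hq3 s t (by linarith) (by linarith)]
      | nlinarith [hq3 s (a * lam) (by linarith) (by nlinarith), hq5]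

lemma scad_lip (lam a s t : ℝ) (hlam : 0 < lam) (ha : 1 < a) (ht : 0 ≤ t) (hts : t ≤ s) :
    scad lam a s - scad lam a t ≤ lam * (s - t) := by
  have h2a : (0:ℝ) < 2 * (a - 1) := by linarith
  have hq1 : ∀ u : ℝ, -(u ^ 2 - 2 * a * lam * u + lam ^ 2) / (2 * (a - 1)) ≤ lam * u := by
    intro u
    rw [div_le_iff₀ h2a]
    nlinarith [sq_nonneg (u - lam)]
  have hq2 : ∀ u v : ℝ, v ≤ u → 2 * lam ≤ u + v →
      -(u ^ 2 - 2 * a * lam * u + lam ^ 2) / (2 * (a - 1)) -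
      -(v ^ 2 - 2 * a * lam * v + lam ^ 2) / (2 * (a - 1)) ≤ lam * (u - v) := by
    intro u v h1 h2
    rw [div_sub_div_same, div_le_iff₀ h2a]
    nlinarith [mul_nonneg (sub_nonneg.2 h1) (by linarith : (0:ℝ) ≤ u + v - 2 * lam)]
  have hq5 : (a + 1) * lam ^ 2 / 2 =
      -((a * lam) ^ 2 - 2 * a * lam * (a * lam) + lam ^ 2) / (2 * (a - 1)) := by
    rw [eq_div_iff h2a.ne']; ring
  unfold scad
  split_ifs <;>
    first
      | linarith
      | nlinarith
      | nlinarith [hq1 s]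
      | nlinarith [hq2 s t (by linarith) (by linarith)]
      | nlinarith [hq1 (a * lam), hq5]
      | nlinarith [hq2 (a * lam) t (by linarith) (by linarith), hq5]

lemma scad_abs_sub (lam a s t : ℝ) (hlam : 0 < lam) (ha : 1 < a) :
    scad lam a |s| - scad lam a |t| ≤ lam * |s - t| := by
  rcases le_total |s| |t| with h | h
  · have : (0:ℝ) ≤ lam * |s - t| := by positivity
    linarith [scad_mono lam a |s| |t| hlam ha (abs_nonneg s) h]
  · have h1 := scad_lip lam a |s| |t| hlam ha (abs_nonneg t) h
    have h2 : |s| - |t| ≤ |s - t| := abs_sub_abs_le_abs_sub s t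
    nlinarith [abs_nonneg (s - t)]

/-- Support decomposition inequality:
  `P_λ(ψ*) − P_λ(ψ̂) ≤ λ‖ν_S‖₁ − P_λ(ν_{S^c})` where `ν = ψ̂ − ψ*` and
  `ψ*` is supported on `S`. -/
theorem scad_support_decomposition (lam a : ℝ) (hlam : 0 < lam) (ha : 2 < a)
    (p : ℕ) (ψstar ψhat : Fin p → ℝ) (S : Finset (Fin p))
    (hsupp : ∀ j ∉ S, ψstar j = 0) :
    scadSum lam a ψstar - scadSum lam a ψhat ≤
      lam * (∑ j, |if j ∈ S then ψhat j - ψstar j else 0|) -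
        scadSum lam a (fun j => if j ∈ S then 0 else ψhat j - ψstar j) := by
  have ha1 : (1:ℝ) < a := by linarith
  unfold scadSum
  rw [Finset.mul_sum, ← Finset.sum_sub_distrib, ← Finset.sum_sub_distrib]
  apply Finset.sum_le_sum
  intro j _
  by_cases hj : j ∈ S
  · simp only [hj, if_pos]
    have h0 : scad lam a |(0:ℝ)| = 0 := by simp [scad, hlam.le]
    rw [h0]
    have := scad_abs_sub lam a (ψstar j) (ψhat j) hlam ha1
    rw [abs_sub_comm (ψstar j) (ψhat j)] at this
    linarith
  · simp only [hj, if_neg, hsupp j hj, sub_zero]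
    have h0 : scad lam a |(0:ℝ)| = 0 := by simp [scad, hlam.le]
    simp only [abs_zero] at h0
    simp [h0]
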